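/- If a Borel function f : X → Y between Polish spaces is σ-continuous with arbitrary pieces, then it is σ-continuous with Borel pieces: there exist Borel sets B_n covering X such that f restricted to each B_n is continuous. -/

import Mathlib

open Set Filter Metric Topology

lemma aux_piece {X Y : Type*} [MetricSpace X] [MetricSpace Y] [CompleteSpace Y]
    [SecondCountableTopology Y]
    [MeasurableSpace X] [BorelSpace X] [MeasurableSpace Y] [BorelSpace Y]
    (f : X → Y) (hf : Measurable f) (S : Set X) (hS : ContinuousOn f S) :
    ∃ B : Set X, MeasurableSet B ∧ S ⊆ B ∧ ContinuousOn f B := by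
  -- oscillation sets
  set Q : ℝ → Set X := fun ε =>
    {x | ∃ δ > 0, ∀ a ∈ S ∩ ball x δ, ∀ b ∈ S ∩ ball x δ, dist (f a) (f b) < ε} with hQ
  have hQopen : ∀ ε, IsOpen (Q ε) := by
    intro ε
    rw [isOpen_iff_mem_nhds]
    rintro x ⟨δ, hδ, hx⟩
    filter_upwards [Metric.ball_mem_nhds x (half_pos hδ)] with x' hx'
    refine ⟨δ/2, half_pos hδ, ?_⟩
    intro a ha b hb
    apply hx a ⟨ha.1, ?_⟩ b ⟨hb.1, ?_⟩
    · calc dist a x ≤ dist a x' + dist x' x := dist_triangle _ _ _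
        _ < δ/2 + δ/2 := add_lt_add ha.2 hx'
        _ = δ := add_halves δ
    · calc dist b x ≤ dist b x' + dist x' x := dist_triangle _ _ _
        _ < δ/2 + δ/2 := add_lt_add hb.2 hx'
        _ = δ := add_halves δ
  set G : Set X := closure S ∩ ⋂ k : ℕ, Q (1/(k+1)) with hG
  have hGmeas : MeasurableSet G :=
    isClosed_closure.measurableSet.inter
      (MeasurableSet.iInter fun k => (hQopen _).measurableSet)
  have hSG : S ⊆ G := by
    intro x hx
    refine ⟨subset_closure hx, mem_iInter.2 fun k => ?_⟩
    have hk : (0:ℝ) < 1/(k+1) := by positivity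
    have := hS x hx
    rw [ContinuousWithinAt, Metric.tendsto_nhdsWithin_nhds] at this
    obtain ⟨δ, hδ, hd⟩ := this _ (half_pos hk)
    refine ⟨δ, hδ, fun a ha b hb => ?_⟩
    calc dist (f a) (f b) ≤ dist (f a) (f x) + dist (f x) (f b) := dist_triangle _ _ _
      _ < 1/(k+1)/2 + 1/(k+1)/2 := by
          refine add_lt_add (hd ha.1 ha.2) ?_
          rw [dist_comm]; exact hd hb.1 hb.2
      _ = 1/(k+1) := add_halves _
  -- every point of G has a limit of f along 𝓝[S] x
  have hlim : ∀ x ∈ G, ∃ y, Tendsto f (𝓝[S] x) (𝓝 y) := by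
    rintro x ⟨hxc, hxq⟩
    have hne : (𝓝[S] x).NeBot := mem_closure_iff_nhdsWithin_neBot.1 hxc
    have hcauchy : Cauchy (map f (𝓝[S] x)) := by
      rw [Metric.cauchy_iff]
      refine ⟨hne.map f, fun ε hε => ?_⟩
      obtain ⟨k, hk⟩ := exists_nat_one_div_lt hε
      obtain ⟨δ, hδ, hosc⟩ := mem_iInter.1 hxq k
      refine ⟨f '' (S ∩ ball x δ), ?_, ?_⟩
      · rw [mem_map]
        exact Filter.mem_of_superset (inter_mem_nhdsWithin S (Metric.ball_mem_nhds x hδ))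
          (fun a ha => mem_image_of_mem f ha)
      · rintro _ ⟨a, ha, rfl⟩ _ ⟨b, hb, rfl⟩
        exact lt_trans (hosc a ha b hb) hk
    obtain ⟨y, hy⟩ := CompleteSpace.complete hcauchy
    exact ⟨y, hy⟩
  set g : X → Y := extendFrom S f with hg
  have hgc : ContinuousOn g G := continuousOn_extendFrom (fun x hx => hx.1) hlim
  have hgS : ∀ x ∈ S, g x = f x := fun x hx => extendFrom_extends hS x hx
  -- equalizer
  set B : Set X := G ∩ {x | f x = g x} with hB
  have hBmeas : MeasurableSet B := by
    have h1 : MeasurableSet {x : G | f (x : X) = g (x : X)} := by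
      exact (hf.comp measurable_subtype_coe).stronglyMeasurable.measurableSet_eq_fun
        (continuousOn_iff_continuous_restrict.1 hgc).measurable.stronglyMeasurable
    have h2 := (MeasurableEmbedding.subtype_coe hGmeas).measurableSet_image.2 h1
    convert h2 using 1
    ext x
    constructor
    · rintro ⟨hxG, hxe⟩; exact ⟨⟨x, hxG⟩, hxe, rfl⟩
    · rintro ⟨⟨x', hx'⟩, he, rfl⟩; exact ⟨hx', he⟩
  refine ⟨B, hBmeas, fun x hx => ⟨hSG hx, (hgS x hx).symm⟩, ?_⟩
  exact (hgc.mono (fun x hx => hx.1)).congr (fun x hx => hx.2)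

theorem sigmaContinuous_with_borel_pieces
    {X Y : Type*} [TopologicalSpace X] [PolishSpace X] [TopologicalSpace Y] [PolishSpace Y]
    [MeasurableSpace X] [BorelSpace X] [MeasurableSpace Y] [BorelSpace Y]
    (f : X → Y) (hf : Measurable f)
    (h : ∃ Xs : ℕ → Set X, (⋃ n, Xs n) = Set.univ ∧ ∀ n, ContinuousOn f (Xs n)) :
    ∃ B : ℕ → Set X, (∀ n, MeasurableSet (B n)) ∧ (⋃ n, B n) = Set.univ ∧
      ∀ n, ContinuousOn f (B n) := by
  letI := TopologicalSpace.upgradeIsCompletelyMetrizable X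
  letI := TopologicalSpace.upgradeIsCompletelyMetrizable Y
  obtain ⟨Xs, hcov, hcont⟩ := h
  choose B hBm hBsub hBcont using fun n => aux_piece f hf (Xs n) (hcont n)
  refine ⟨B, hBm, ?_, hBcont⟩
  rw [eq_univ_iff_forall]
  intro x
  have : x ∈ ⋃ n, Xs n := hcov ▸ mem_univ x
  obtain ⟨n, hn⟩ := mem_iUnion.1 this
  exact mem_iUnion.2 ⟨n, hBsub n hn⟩
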